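/- Let A, B be d×d complex matrices with diag(A) = diag(B) and let ρ_(A,B) = ∑_{i,j} A_{ij} |ij⟩⟨ij| + ∑_{i≠j} B_{ij} |ii⟩⟨jj| on ℂ^d ⊗ ℂ^d. Then ρ_(A,B) is positive semidefinite if and only if A is entrywise nonnegative (in particular real) and B is positive semidefinite. -/

import Mathlib

open Matrix ComplexOrder

/-- The CLDUI state `ρ_(A,B)` on `ℂ^d ⊗ ℂ^d`: entries `A_{ij}` at positions
`((i,j),(i,j))`, `B_{ij}` at positions `((i,i),(j,j))` for `i ≠ j`, zero elsewhere. -/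
def cldui {d : ℕ} (A B : Matrix (Fin d) (Fin d) ℂ) :
    Matrix (Fin d × Fin d) (Fin d × Fin d) ℂ :=
  Matrix.of fun p q =>
    if p = q then A p.1 p.2
    else if p.1 = p.2 ∧ q.1 = q.2 then B p.1 q.1 else 0

lemma diag_entry_nonneg {n : Type*} [Fintype n] [DecidableEq n]
    {M : Matrix n n ℂ} (h : M.PosSemidef) (p : n) : 0 ≤ M p p := by
  simpa [dotProduct, Pi.single_apply, apply_ite] using h.dotProduct_mulVec_nonneg (Pi.single p 1)

lemma cldui_quad {d : ℕ} (A B : Matrix (Fin d) (Fin d) ℂ) (hdiag : ∀ i, A i i = B i i)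
    (y : Fin d × Fin d → ℂ) :
    dotProduct (star y) (cldui A B *ᵥ y)
      = (∑ p : Fin d × Fin d, if p.1 = p.2 then 0 else A p.1 p.2 * (star (y p) * y p))
        + dotProduct (star fun i => y (i, i)) (B *ᵥ fun i => y (i, i)) := by
  have hrow : ∀ p : Fin d × Fin d, (cldui A B *ᵥ y) p =
      if p.1 = p.2 then ∑ j, B p.1 j * y (j, j) else A p.1 p.2 * y p := by
    intro p
    by_cases hp : p.1 = p.2
    · simp only [hp, if_true, mulVec, dotProduct, cldui, of_apply]
      rw [Fintype.sum_prod_type]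
      refine Finset.sum_congr rfl fun j _ => ?_
      rw [Finset.sum_eq_single j]
      · by_cases hq : p = (j, j)
        · subst hq; simp [hdiag]
        · simp [hq, hp]
      · intro k _ hk
        have hpq : p ≠ (j, k) := by rintro rfl; exact hk hp.symm
        simp [hpq, Ne.symm hk]
      · simp
    · simp only [hp, if_false, mulVec, dotProduct, cldui, of_apply]
      rw [Finset.sum_eq_single p]
      · simp
      · intro q _ hq
        simp [Ne.symm hq, hp]
      · simp
  simp only [dotProduct, hrow, Pi.star_apply]
  have : ∀ x : Fin d × Fin d,
      star (y x) * (if x.1 = x.2 then ∑ j, B x.1 j * y (j, j) else A x.1 x.2 * y x)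
      = (if x.1 = x.2 then 0 else A x.1 x.2 * (star (y x) * y x))
        + (if x.1 = x.2 then star (y x) * ∑ j, B x.1 j * y (j, j) else 0) := by
    intro x
    by_cases hx : x.1 = x.2 <;> simp [hx] <;> ring
  rw [Finset.sum_congr rfl fun x _ => this x, Finset.sum_add_distrib]
  congr 1
  rw [Fintype.sum_prod_type]
  simp [mulVec, dotProduct, Finset.sum_ite_eq]

/-- `ρ_(A,B)` is positive semidefinite if and only if `A` is entrywise nonnegative
(in particular real) and `B` is positive semidefinite. -/
theorem cldui_posSemidef_iff {d : ℕ} (A B : Matrix (Fin d) (Fin d) ℂ)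
    (hdiag : ∀ i, A i i = B i i) :
    (cldui A B).PosSemidef ↔ (∀ i j, 0 ≤ A i j) ∧ B.PosSemidef := by
  constructor
  · intro hρ
    have hA : ∀ i j, 0 ≤ A i j := by
      intro i j
      have := diag_entry_nonneg hρ (i, j)
      simpa [cldui] using this
    refine ⟨hA, Matrix.PosSemidef.of_dotProduct_mulVec_nonneg ?_ ?_⟩
    · ext i j
      rw [conjTranspose_apply]
      by_cases hij : i = j
      · subst hij
        rw [← hdiag]
        exact (IsSelfAdjoint.of_nonneg (hA i i)).star_eq
      · have := hρ.1.apply (i, i) (j, j)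
        have hne : (j, j) ≠ (i, i) := by simp [Ne.symm hij]
        simpa [cldui, hne, hij] using this
    · intro x
      have h := hρ.dotProduct_mulVec_nonneg (fun p => if p.1 = p.2 then x p.1 else 0)
      rw [cldui_quad A B hdiag] at h
      have hz : (∑ p : Fin d × Fin d, if p.1 = p.2 then 0
          else A p.1 p.2 * (star (if p.1 = p.2 then x p.1 else 0)
            * (if p.1 = p.2 then x p.1 else 0))) = (0 : ℂ) := by
        refine Finset.sum_eq_zero fun p _ => ?_
        by_cases hp : p.1 = p.2 <;> simp [hp]
      rw [hz, zero_add] at h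
      simpa using h
  · rintro ⟨hA, hB⟩
    refine Matrix.PosSemidef.of_dotProduct_mulVec_nonneg ?_ ?_
    · ext p q
      rw [conjTranspose_apply]
      have hAr : ∀ i j, star (A i j) = A i j := fun i j =>
        (IsSelfAdjoint.of_nonneg (hA i j)).star_eq
      by_cases hpq : p = q
      · subst hpq; simp [cldui, hAr]
      · by_cases h2 : p.1 = p.2 ∧ q.1 = q.2
        · simpa [cldui, hpq, Ne.symm hpq, h2, h2.1, h2.2] using hB.1.apply p.1 q.1
        · have h2' : ¬(q.1 = q.2 ∧ p.1 = p.2) := fun h => h2 ⟨h.2, h.1⟩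
          simp [cldui, hpq, Ne.symm hpq, h2, h2']
    · intro y
      rw [cldui_quad A B hdiag]
      refine add_nonneg (Finset.sum_nonneg fun p _ => ?_) (hB.dotProduct_mulVec_nonneg _)
      by_cases hp : p.1 = p.2
      · simp [hp]
      · simp only [hp, if_false]
        exact mul_nonneg (hA _ _) (star_mul_self_nonneg _)
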